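/- arXiv:1002.2633 — 3 statements merged into one kernel-verified Lean document; each statement's English description precedes it below -/
import Mathlib

section
/- Let Z be a metric space and T : Lip_bs(Z) × Lip_loc(Z)^m → ℝ an m-dimensional metric functional (multilinear, continuous under pointwise convergence with locally uniform Lipschitz bounds, and local in the sense that T(f,π)=0 whenever some π_i is constant on a δ-neighborhood of spt f). If some π_i is constant on spt f, then T(f,π_1,…,π_m)=0. -/
open Metric Filter MeasureTheory ENNReal Bornology Topology

variable {Z : Type*} [MetricSpace Z]

/-- Bounded-support Lipschitz real functions. -/
def LipBS {Z : Type*} [MetricSpace Z] (f : Z → ℝ) : Prop :=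
  (∃ K : NNReal, LipschitzWith K f) ∧ IsBounded (tsupport f)

/-- Functions Lipschitz on bounded subsets. -/
def LipLoc {Z : Type*} [MetricSpace Z] (f : Z → ℝ) : Prop :=
  ∀ s : Set Z, IsBounded s → ∃ K : NNReal, LipschitzOnWith K f s

/-- Multilinearity of a functional on `Lip_bs(Z) × Lip_loc(Z)^m`. -/
def IsMultilinearFunctional {Z : Type*} [MetricSpace Z] {m : ℕ}
    (T : (Z → ℝ) → (Fin m → Z → ℝ) → ℝ) : Prop :=
  (∀ f g π, LipBS f → LipBS g → (∀ i, LipLoc (π i)) →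
      T (f + g) π = T f π + T g π) ∧
  (∀ (c : ℝ) f π, LipBS f → (∀ i, LipLoc (π i)) → T (c • f) π = c * T f π) ∧
  (∀ f π (i : Fin m) (g g' : Z → ℝ), LipBS f → (∀ j, LipLoc (π j)) → LipLoc g → LipLoc g' →
      T f (Function.update π i (g + g')) =
        T f (Function.update π i g) + T f (Function.update π i g')) ∧
  (∀ f π (i : Fin m) (c : ℝ) (g : Z → ℝ), LipBS f → (∀ j, LipLoc (π j)) → LipLoc g →
      T f (Function.update π i (c • g)) = c * T f (Function.update π i g))

/-- Metric functional: multilinear, continuous and local (Definition 2.1). -/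
def IsMetricFunctional {Z : Type*} [MetricSpace Z] {m : ℕ}
    (T : (Z → ℝ) → (Fin m → Z → ℝ) → ℝ) : Prop :=
  IsMultilinearFunctional T ∧
  (∀ f (π : Fin m → Z → ℝ) (πj : ℕ → Fin m → Z → ℝ),
      LipBS f → (∀ i, LipLoc (π i)) → (∀ j i, LipLoc (πj j i)) →
      (∀ i z, Tendsto (fun j => πj j i z) atTop (𝓝 (π i z))) →
      (∀ s : Set Z, IsBounded s → ∃ K : NNReal, ∀ i j, LipschitzOnWith K (πj j i) s) →
      Tendsto (fun j => T f (πj j)) atTop (𝓝 (T f π))) ∧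
  (∀ f π, LipBS f → (∀ i, LipLoc (π i)) →
      (∃ i : Fin m, ∃ δ : ℝ, 0 < δ ∧ ∀ z w : Z,
        infDist z (tsupport f) ≤ δ → infDist w (tsupport f) ≤ δ → π i z = π i w) →
      T f π = 0)

/-- The mass of `T` in a set `V`. -/
noncomputable def massIn {Z : Type*} [MetricSpace Z] {m : ℕ}
    (T : (Z → ℝ) → (Fin m → Z → ℝ) → ℝ) (V : Set Z) : ℝ≥0∞ :=
  ⨆ p : {q : (n : ℕ) × (Fin n → (Z → ℝ) × (Fin m → Z → ℝ)) //
      (∀ i, LipBS (q.2 i).1 ∧ tsupport (q.2 i).1 ⊆ V ∧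
        ∀ k, LipschitzWith 1 ((q.2 i).2 k)) ∧
      (∀ z, (∑ i : Fin q.1, |(q.2 i).1 z|) ≤ 1)},
    ENNReal.ofReal (∑ i : Fin p.1.1, T ((p.1.2 i).1) ((p.1.2 i).2))

/-- The outer measure `‖T‖`. -/
noncomputable def normT {Z : Type*} [MetricSpace Z] {m : ℕ}
    (T : (Z → ℝ) → (Fin m → Z → ℝ) → ℝ) (A : Set Z) : ℝ≥0∞ :=
  ⨅ (V : Set Z) (_ : IsOpen V ∧ A ⊆ V), massIn T V

/-- Finite mass on bounded sets, concentrated near compact sets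
(membership condition for `M_{m,loc}(Z)`). -/
def MlocCond {Z : Type*} [MetricSpace Z] {m : ℕ}
    (T : (Z → ℝ) → (Fin m → Z → ℝ) → ℝ) : Prop :=
  ∀ U : Set Z, IsOpen U → IsBounded U → ∀ ε : ℝ, 0 < ε →
    ∃ C : Set Z, IsCompact C ∧ C ⊆ U ∧ massIn T U < ⊤ ∧
      massIn T (U \ C) < ENNReal.ofReal ε

private lemma lipOnWeaken {α β : Type*} [PseudoEMetricSpace α] [PseudoEMetricSpace β]
    {K K' : NNReal} {f : α → β} {s : Set α} (h : LipschitzOnWith K f s) (hK : K ≤ K') :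
    LipschitzOnWith K' f s := fun x hx y hy =>
  le_trans (h hx hy) (mul_le_mul_left (by exact_mod_cast hK) _)

private lemma truncLip (c ε : ℝ) :
    LipschitzWith 1 (fun x : ℝ => min (max (x - ε) c) (x + ε)) := by
  apply LipschitzWith.of_dist_le_mul
  intro x y
  simp only [NNReal.coe_one, one_mul, Real.dist_eq]
  calc |min (max (x - ε) c) (x + ε) - min (max (y - ε) c) (y + ε)|
      ≤ max |max (x - ε) c - max (y - ε) c| |(x + ε) - (y + ε)| :=
        abs_min_sub_min_le_max _ _ _ _
    _ ≤ |x - y| := by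
        apply max_le
        · have h1 : |max (x - ε) c - max (y - ε) c| ≤ max |(x - ε) - (y - ε)| |c - c| :=
            abs_max_sub_max_le_max _ _ _ _
          have h2 : (x - ε) - (y - ε) = x - y := by ring
          simpa [h2] using h1
        · have h2 : (x + ε) - (y + ε) = x - y := by ring
          simp [h2]

/-- strict locality of metric functionals (Lemma 2.2):
if some `π i` is constant on `spt f`, then `T (f, π) = 0`. -/
theorem strict_locality {Z : Type*} [MetricSpace Z] {m : ℕ}
    (T : (Z → ℝ) → (Fin m → Z → ℝ) → ℝ) (hT : IsMetricFunctional T)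
    (f : Z → ℝ) (π : Fin m → Z → ℝ)
    (hf : LipBS f) (hπ : ∀ i, LipLoc (π i))
    (i : Fin m) (hconst : ∀ z ∈ tsupport f, ∀ w ∈ tsupport f, π i z = π i w) :
    T f π = 0 := by
  classical
  obtain ⟨hTlin, hTcont, hTloc⟩ := hT
  by_cases hS : (tsupport f).Nonempty
  · obtain ⟨z0, hz0⟩ := hS
    set S := tsupport f with hSdef
    set c := π i z0 with hc
    -- Lipschitz constant on a bounded neighborhood of S
    obtain ⟨R, hR⟩ := hf.2.subset_closedBall z0
    have hBbdd : IsBounded {z : Z | infDist z S ≤ 1} := by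
      apply (Metric.isBounded_closedBall (x := z0) (r := R + 2)).subset
      intro z hz
      simp only [Set.mem_setOf_eq] at hz
      obtain ⟨w, hwS, hwd⟩ := (Metric.infDist_lt_iff ⟨z0, hz0⟩).mp
        (lt_of_le_of_lt hz one_lt_two)
      have hw : dist w z0 ≤ R := hR hwS
      have : dist z z0 ≤ dist z w + dist w z0 := dist_triangle _ _ _
      simp only [Metric.mem_closedBall]
      linarith
    obtain ⟨K, hK⟩ := hπ i _ hBbdd
    set ε : ℕ → ℝ := fun j => 1 / (j + 1) with hε
    have hεpos : ∀ j, 0 < ε j := fun j => by positivity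
    set g : ℕ → Z → ℝ := fun j z => min (max (π i z - ε j) c) (π i z + ε j) with hg
    have hgc : ∀ j z, |π i z - c| ≤ ε j → g j z = c := by
      intro j z hz
      rw [abs_le] at hz
      simp only [hg]
      rw [max_eq_right (by linarith), min_eq_left (by linarith)]
    have hgclose : ∀ j z, |g j z - π i z| ≤ ε j := by
      intro j z
      rw [abs_le]
      constructor
      · have h1 : π i z - ε j ≤ min (max (π i z - ε j) c) (π i z + ε j) :=
          le_min (le_max_left _ _) (by have := (hεpos j).le; linarith)
        simp only [hg]; linarith
      · have h2 : min (max (π i z - ε j) c) (π i z + ε j) ≤ π i z + ε j := min_le_right _ _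
        simp only [hg]; linarith
    have hglip : ∀ j (s : Set Z) (K' : NNReal), LipschitzOnWith K' (π i) s →
        LipschitzOnWith K' (g j) s := by
      intro j s K' hK'
      have := (truncLip c (ε j)).comp_lipschitzOnWith hK'
      simpa [Function.comp_def, hg] using this
    set πj : ℕ → Fin m → Z → ℝ := fun j => Function.update π i (g j) with hπj
    have hπjLoc : ∀ j k, LipLoc (πj j k) := by
      intro j k s hs
      rcases eq_or_ne k i with rfl | hki
      · obtain ⟨K', hK'⟩ := hπ k s hs
        exact ⟨K', by simpa [hπj] using hglip j s K' hK'⟩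
      · obtain ⟨K', hK'⟩ := hπ k s hs
        exact ⟨K', by simpa [hπj, Function.update_of_ne hki] using hK'⟩
    -- each T f (πj j) = 0 by locality
    have hzero : ∀ j, T f (πj j) = 0 := by
      intro j
      apply hTloc f (πj j) hf (hπjLoc j)
      refine ⟨i, min 1 (ε j / (2 * (K + 1))), ?_, ?_⟩
      · have : (0:ℝ) < ε j / (2 * (K + 1)) := by positivity
        exact lt_min one_pos this
      · set δ := min 1 (ε j / (2 * (K + 1))) with hδ
        have hδ1 : δ ≤ 1 := min_le_left _ _
        have hδ2 : δ ≤ ε j / (2 * (K + 1)) := min_le_right _ _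
        have hδpos : 0 < δ := lt_min one_pos (by positivity)
        have key : ∀ z : Z, infDist z S ≤ δ → g j z = c := by
          intro z hz
          apply hgc
          have hlt : infDist z S < 2 * δ := lt_of_le_of_lt hz (by linarith)
          obtain ⟨w0, hw0S, hw0d⟩ := (Metric.infDist_lt_iff ⟨z0, hz0⟩).mp hlt
          have hπw0 : π i w0 = c := hconst w0 hw0S z0 hz0
          have hzB : z ∈ {z : Z | infDist z S ≤ 1} := le_trans hz hδ1
          have hw0B : w0 ∈ {z : Z | infDist z S ≤ 1} := by
            simp only [Set.mem_setOf_eq]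
            rw [Metric.infDist_zero_of_mem hw0S]
            exact zero_le_one
          have := hK.dist_le_mul z hzB w0 hw0B
          rw [Real.dist_eq] at this
          have hKnn : (0:ℝ) ≤ K := K.coe_nonneg
          calc |π i z - c| = |π i z - π i w0| := by rw [hπw0]
            _ ≤ K * |dist z w0| := by rw [abs_of_nonneg dist_nonneg]; exact this
            _ ≤ K * (2 * δ) := by
                rw [abs_of_nonneg dist_nonneg]
                exact mul_le_mul_of_nonneg_left hw0d.le hKnn
            _ ≤ ε j := by
                have h1 : (K:ℝ) * (2 * δ) ≤ K * (2 * (ε j / (2 * (K + 1)))) := by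
                  apply mul_le_mul_of_nonneg_left _ hKnn
                  linarith
                have h2 : (K:ℝ) * (2 * (ε j / (2 * (K + 1)))) ≤ ε j := by
                  have h3 : (K:ℝ) * (2 * (ε j / (2 * (K + 1)))) = (K * ε j) / (K + 1) := by
                    field_simp
                  rw [h3, div_le_iff₀ (by positivity)]
                  nlinarith [(hεpos j).le, hKnn]
                linarith
        intro z w hz hw
        have hgj : πj j i = g j := Function.update_self i (g j) π
        rw [hgj, key z hz, key w hw]
    -- continuity
    have hconv : ∀ k z, Tendsto (fun j => πj j k z) atTop (𝓝 (π k z)) := by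
      intro k z
      rcases eq_or_ne k i with rfl | hki
      · have hd : ∀ j, dist (πj j k z) (π k z) ≤ ε j := by
          intro j
          have hgj : πj j k = g j := Function.update_self k (g j) π
          rw [hgj, Real.dist_eq]
          exact hgclose j z
        rw [tendsto_iff_dist_tendsto_zero]
        exact squeeze_zero (fun j => dist_nonneg) hd
          tendsto_one_div_add_atTop_nhds_zero_nat
      · have : ∀ j, πj j k z = π k z := fun j => by
          show Function.update π i (g j) k z = π k z
          rw [Function.update_of_ne hki]
        simpa only [this] using (tendsto_const_nhds : Tendsto (fun _ : ℕ => π k z) atTop _)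
    have hUnif : ∀ s : Set Z, IsBounded s → ∃ K' : NNReal,
        ∀ k j, LipschitzOnWith K' (πj j k) s := by
      intro s hs
      choose K0 hK0 using fun k => hπ k s hs
      refine ⟨Finset.univ.sup K0, ?_⟩
      intro k j
      have hle : K0 k ≤ Finset.univ.sup K0 := Finset.le_sup (Finset.mem_univ k)
      rcases eq_or_ne k i with rfl | hki
      · have : LipschitzOnWith (K0 k) (g j) s := hglip j s (K0 k) (hK0 k)
        have hgj : πj j k = g j := Function.update_self k (g j) π
        rw [hgj]
        exact lipOnWeaken this hle
      · show LipschitzOnWith _ (Function.update π i (g j) k) s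
        rw [Function.update_of_ne hki]
        exact lipOnWeaken (hK0 k) hle
    have hT1 : Tendsto (fun j => T f (πj j)) atTop (𝓝 (T f π)) :=
      hTcont f π πj hf hπ hπjLoc hconv hUnif
    have hT2 : Tendsto (fun j => T f (πj j)) atTop (𝓝 0) := by
      simpa [hzero] using (tendsto_const_nhds : Tendsto (fun _ : ℕ => (0:ℝ)) atTop _)
    exact tendsto_nhds_unique hT1 hT2
  · -- empty support: f = 0
    have hf0 : f = 0 := by
      funext z
      by_contra h
      exact hS ⟨z, subset_tsupport f (by simpa [Function.mem_support] using h)⟩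
    have := hTlin.2.1 0 f π hf hπ
    rw [hf0]
    simpa [hf0] using this
end

section
/- Let Z be a metric space and T : Lip_bs(Z) × Lip_loc(Z)^m → ℝ a multilinear function such that for every bounded open set U ⊂ Z and every ε > 0 there is a compact set C ⊂ U with M_{U∖C}(T) < ε. Then the set function ‖T‖(A) := inf{ M_V(T) : V open, A ⊂ V } is a Borel regular outer measure on Z. -/
open Metric Filter MeasureTheory ENNReal Bornology Topology

variable {Z : Type*} [MetricSpace Z]

def BddLip (g : Z → ℝ) : Prop :=
  (∃ K : NNReal, LipschitzWith K g) ∧ ∃ A : ℝ, ∀ z, |g z| ≤ A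

lemma bddLip_const (c : ℝ) : BddLip (fun _ : Z => c) :=
  ⟨⟨0, LipschitzWith.const c⟩, |c|, fun _ => le_rfl⟩

lemma BddLip.add {f g : Z → ℝ} (hf : BddLip f) (hg : BddLip g) :
    BddLip (fun z => f z + g z) := by
  obtain ⟨⟨Kf, hKf⟩, Af, hAf⟩ := hf
  obtain ⟨⟨Kg, hKg⟩, Ag, hAg⟩ := hg
  exact ⟨⟨Kf + Kg, hKf.add hKg⟩, Af + Ag, fun z =>
    (abs_add_le _ _).trans (add_le_add (hAf z) (hAg z))⟩

lemma BddLip.sub {f g : Z → ℝ} (hf : BddLip f) (hg : BddLip g) :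
    BddLip (fun z => f z - g z) := by
  obtain ⟨⟨Kf, hKf⟩, Af, hAf⟩ := hf
  obtain ⟨⟨Kg, hKg⟩, Ag, hAg⟩ := hg
  exact ⟨⟨Kf + Kg, hKf.sub hKg⟩, Af + Ag, fun z =>
    (abs_sub _ _).trans (add_le_add (hAf z) (hAg z))⟩

lemma BddLip.mul {f g : Z → ℝ} (hf : BddLip f) (hg : BddLip g) :
    BddLip (fun z => f z * g z) := by
  obtain ⟨⟨Kf, hKf⟩, Af, hAf⟩ := hf
  obtain ⟨⟨Kg, hKg⟩, Ag, hAg⟩ := hg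
  refine ⟨⟨(Af * Kg + Ag * Kf).toNNReal, LipschitzWith.of_dist_le_mul fun x y => ?_⟩,
    Af * Ag, fun z => ?_⟩
  · have hAf0 : 0 ≤ Af := (abs_nonneg _).trans (hAf x)
    have hAg0 : 0 ≤ Ag := (abs_nonneg _).trans (hAg x)
    have h1 : dist (f x * g x) (f y * g y) ≤ |f x| * |g x - g y| + |g y| * |f x - f y| := by
      rw [Real.dist_eq]
      calc |f x * g x - f y * g y| = |f x * (g x - g y) + g y * (f x - f y)| := by ring_nf
        _ ≤ |f x * (g x - g y)| + |g y * (f x - f y)| := abs_add_le _ _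
        _ = |f x| * |g x - g y| + |g y| * |f x - f y| := by rw [abs_mul, abs_mul]
    have h2 : |g x - g y| ≤ Kg * dist x y := by
      have := hKg.dist_le_mul x y; rwa [Real.dist_eq] at this
    have h3 : |f x - f y| ≤ Kf * dist x y := by
      have := hKf.dist_le_mul x y; rwa [Real.dist_eq] at this
    have h4 : dist (f x * g x) (f y * g y) ≤ (Af * Kg + Ag * Kf) * dist x y := by
      have e1 : |f x| * |g x - g y| ≤ Af * (Kg * dist x y) :=
        mul_le_mul (hAf x) h2 (abs_nonneg _) hAf0
      have e2 : |g y| * |f x - f y| ≤ Ag * (Kf * dist x y) :=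
        mul_le_mul (hAg y) h3 (abs_nonneg _) hAg0
      nlinarith [h1]
    refine h4.trans (mul_le_mul_of_nonneg_right ?_ dist_nonneg)
    exact le_max_left _ _ |>.trans (Real.coe_toNNReal' _).ge
  · rw [abs_mul]
    exact mul_le_mul (hAf z) (hAg z) (abs_nonneg _) ((abs_nonneg _).trans (hAf z))

lemma BddLip.finsetSum {ι : Type*} (s : Finset ι) (g : ι → Z → ℝ)
    (h : ∀ i ∈ s, BddLip (g i)) : BddLip (fun z => ∑ i ∈ s, g i z) := by
  classical
  induction s using Finset.induction_on with
  | empty => simpa using bddLip_const 0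
  | @insert a s ha ih =>
    simp only [Finset.sum_insert ha]
    exact (h a (Finset.mem_insert_self a s)).add
      (ih fun i hi => h i (Finset.mem_insert_of_mem hi))


lemma lipBS_zero : LipBS (0 : Z → ℝ) := by
  refine ⟨⟨0, LipschitzWith.const 0⟩, ?_⟩
  have : tsupport (0 : Z → ℝ) = ∅ := by
    simp [tsupport]
  simp [this]

lemma LipBS.bddLip {f : Z → ℝ} (hf : LipBS f) : BddLip f := by
  obtain ⟨⟨K, hK⟩, hb⟩ := hf
  refine ⟨⟨K, hK⟩, ?_⟩
  rcases Set.eq_empty_or_nonempty (tsupport f) with he | ⟨z0, hz0⟩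
  · refine ⟨0, fun z => ?_⟩
    have : f z = 0 := by
      have := Function.support_subset_iff'.1 (subset_tsupport f)
      by_contra h
      exact absurd (subset_tsupport f (by simpa [Function.mem_support] using h)) (by simp [he])
    simp [this]
  · obtain ⟨Cb, hCb⟩ := Metric.isBounded_iff.1 hb
    have hCb0 : 0 ≤ Cb := dist_nonneg.trans (hCb hz0 hz0)
    refine ⟨|f z0| + K * Cb, fun z => ?_⟩
    by_cases hz : f z = 0
    · simp [hz]
      positivity
    · have hzS : z ∈ tsupport f := subset_tsupport f (by simpa [Function.mem_support] using hz)
      have h1 : |f z - f z0| ≤ K * Cb := by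
        have := hK.dist_le_mul z z0
        rw [Real.dist_eq] at this
        refine this.trans (mul_le_mul_of_nonneg_left (hCb hzS hz0) K.2)
      calc |f z| = |f z0 + (f z - f z0)| := by ring_nf
        _ ≤ |f z0| + |f z - f z0| := abs_add_le _ _
        _ ≤ |f z0| + K * Cb := by linarith

lemma LipBS.add {f g : Z → ℝ} (hf : LipBS f) (hg : LipBS g) : LipBS (f + g) := by
  obtain ⟨⟨Kf, hKf⟩, hbf⟩ := hf
  obtain ⟨⟨Kg, hKg⟩, hbg⟩ := hg
  refine ⟨⟨Kf + Kg, hKf.add hKg⟩, ?_⟩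
  refine ((hbf.union hbg).subset ?_)
  refine (closure_minimal ?_ (isClosed_closure.union isClosed_closure))
  exact (Function.support_add f g).trans (Set.union_subset_union (subset_tsupport f) (subset_tsupport g))

lemma BddLip.mulLipBS {g f : Z → ℝ} (hg : BddLip g) (hf : LipBS f) :
    LipBS (fun z => g z * f z) := by
  obtain ⟨hL, -⟩ := hg.mul hf.bddLip
  refine ⟨hL, hf.2.subset (closure_minimal ?_ isClosed_closure)⟩
  intro z hz
  have : f z ≠ 0 := by
    simp only [Function.mem_support] at hz
    intro h; exact hz (by simp [h])
  exact subset_tsupport f this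

lemma LipBS.finsetSum {ι : Type*} (s : Finset ι) (u : ι → Z → ℝ)
    (h : ∀ i ∈ s, LipBS (u i)) : LipBS (∑ i ∈ s, u i) := by
  classical
  induction s using Finset.induction_on with
  | empty => simpa using lipBS_zero
  | @insert a s ha ih =>
    rw [Finset.sum_insert ha]
    exact (h a (Finset.mem_insert_self a s)).add
      (ih fun i hi => h i (Finset.mem_insert_of_mem hi))





section Taux
variable {m : ℕ} {T : (Z → ℝ) → (Fin m → Z → ℝ) → ℝ}

lemma lipLoc_of_one {π : Fin m → Z → ℝ} (hπ : ∀ k, LipschitzWith 1 (π k)) :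
    ∀ k, LipLoc (π k) := fun k _ _ => ⟨1, (hπ k).lipschitzOnWith⟩

lemma T_zero (hmul : IsMultilinearFunctional T) {π : Fin m → Z → ℝ}
    (hπ : ∀ k, LipLoc (π k)) : T 0 π = 0 := by
  have h := hmul.2.1 0 0 π lipBS_zero hπ
  simpa using h

lemma T_finsetSum (hmul : IsMultilinearFunctional T) {ι : Type*} (s : Finset ι)
    (u : ι → Z → ℝ) (hu : ∀ i ∈ s, LipBS (u i)) {π : Fin m → Z → ℝ}
    (hπ : ∀ k, LipLoc (π k)) :
    T (∑ i ∈ s, u i) π = ∑ i ∈ s, T (u i) π := by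
  classical
  induction s using Finset.induction_on with
  | empty => simpa using T_zero hmul hπ
  | @insert a s ha ih =>
    rw [Finset.sum_insert ha, Finset.sum_insert ha,
      hmul.1 (u a) (∑ i ∈ s, u i) π (hu a (Finset.mem_insert_self a s))
        (LipBS.finsetSum s u fun i hi => hu i (Finset.mem_insert_of_mem hi)) hπ,
      ih fun i hi => hu i (Finset.mem_insert_of_mem hi)]

lemma ofReal_finsetSum_le {ι : Type*} (s : Finset ι) (f : ι → ℝ) :
    ENNReal.ofReal (∑ i ∈ s, f i) ≤ ∑ i ∈ s, ENNReal.ofReal (f i) := by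
  classical
  induction s using Finset.induction_on with
  | empty => simp
  | @insert a s ha ih =>
    rw [Finset.sum_insert ha, Finset.sum_insert ha]
    exact (ENNReal.ofReal_add_le).trans (add_le_add le_rfl ih)

lemma le_massIn {V : Set Z} {n : ℕ} (q : Fin n → (Z → ℝ) × (Fin m → Z → ℝ))
    (h1 : ∀ i, LipBS (q i).1 ∧ tsupport (q i).1 ⊆ V ∧ ∀ k, LipschitzWith 1 ((q i).2 k))
    (h2 : ∀ z, (∑ i, |(q i).1 z|) ≤ 1) :
    ENNReal.ofReal (∑ i, T ((q i).1) ((q i).2)) ≤ massIn T V :=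
  le_iSup_of_le ⟨⟨n, q⟩, h1, h2⟩ le_rfl

lemma massIn_le {V : Set Z} {a : ℝ≥0∞}
    (h : ∀ (n : ℕ) (q : Fin n → (Z → ℝ) × (Fin m → Z → ℝ)),
      (∀ i, LipBS (q i).1 ∧ tsupport (q i).1 ⊆ V ∧ ∀ k, LipschitzWith 1 ((q i).2 k)) →
      (∀ z, (∑ i, |(q i).1 z|) ≤ 1) →
      ENNReal.ofReal (∑ i, T ((q i).1) ((q i).2)) ≤ a) :
    massIn T V ≤ a := by
  refine iSup_le ?_
  rintro ⟨⟨n, q⟩, h1, h2⟩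
  exact h n q h1 h2

lemma massIn_mono {V W : Set Z} (h : V ⊆ W) : massIn T V ≤ massIn T W := by
  refine massIn_le fun n q h1 h2 => le_massIn q (fun i => ?_) h2
  exact ⟨(h1 i).1, (h1 i).2.1.trans h, (h1 i).2.2⟩

lemma massIn_empty (hmul : IsMultilinearFunctional T) : massIn T (∅ : Set Z) = 0 := by
  refine le_antisymm (massIn_le fun n q h1 h2 => ?_) (zero_le)
  have hz : ∀ i, (q i).1 = 0 := by
    intro i
    have := (h1 i).2.1
    rw [Set.subset_empty_iff] at this
    have hsupp : Function.support (q i).1 = ∅ :=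
      Set.subset_empty_iff.1 ((subset_tsupport _).trans this.subset)
    exact Function.support_eq_empty_iff.1 hsupp
  have : ∀ i, T ((q i).1) ((q i).2) = 0 := fun i => by
    rw [hz i]; exact T_zero hmul (lipLoc_of_one (h1 i).2.2)
  simp [this]

end Taux

section Taux2
variable {m : ℕ} {T : (Z → ℝ) → (Fin m → Z → ℝ) → ℝ}

instance massIn_nonempty (V : Set Z) :
    Nonempty {q : (n : ℕ) × (Fin n → (Z → ℝ) × (Fin m → Z → ℝ)) //
      (∀ i, LipBS (q.2 i).1 ∧ tsupport (q.2 i).1 ⊆ V ∧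
        ∀ k, LipschitzWith 1 ((q.2 i).2 k)) ∧
      (∀ z, (∑ i : Fin q.1, |(q.2 i).1 z|) ≤ 1)} :=
  ⟨⟨⟨0, Fin.elim0⟩, fun i => i.elim0, fun z => by simp⟩⟩

lemma eq_zero_of_not_mem {V : Set Z} {f : Z → ℝ} (h : tsupport f ⊆ V) {z : Z}
    (hz : z ∉ V) : f z = 0 := by
  by_contra hf
  exact hz (h (subset_tsupport f (by simpa [Function.mem_support] using hf)))

lemma massIn_union_disjoint (V₁ V₂ V : Set Z) (h1 : V₁ ⊆ V) (h2 : V₂ ⊆ V)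
    (hd : Disjoint V₁ V₂) : massIn T V₁ + massIn T V₂ ≤ massIn T V := by
  rw [massIn, ENNReal.iSup_add]
  refine iSup_le ?_
  rintro ⟨⟨n1, q1⟩, h11, h12⟩
  rw [massIn, ENNReal.add_iSup]
  refine iSup_le ?_
  rintro ⟨⟨n2, q2⟩, h21, h22⟩
  simp only
  by_cases hs1 : 0 ≤ ∑ i, T ((q1 i).1) ((q1 i).2)
  · by_cases hs2 : 0 ≤ ∑ i, T ((q2 i).1) ((q2 i).2)
    · rw [← ENNReal.ofReal_add hs1 hs2]
      have hsum : (∑ i, T ((q1 i).1) ((q1 i).2)) + (∑ i, T ((q2 i).1) ((q2 i).2)) =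
          ∑ i : Fin (n1 + n2), T ((Fin.append q1 q2 i).1) ((Fin.append q1 q2 i).2) := by
        rw [Fin.sum_univ_add]
        simp [Fin.append_left, Fin.append_right]
      rw [hsum]
      refine le_massIn (Fin.append q1 q2) (fun i => ?_) (fun z => ?_)
      · refine Fin.addCases (fun i => ?_) (fun i => ?_) i
        · simpa [Fin.append_left] using
            ⟨(h11 i).1, (h11 i).2.1.trans h1, (h11 i).2.2⟩
        · simpa [Fin.append_right] using
            ⟨(h21 i).1, (h21 i).2.1.trans h2, (h21 i).2.2⟩
      · rw [Fin.sum_univ_add]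
        simp only [Fin.append_left, Fin.append_right]
        by_cases hz : z ∈ V₁
        · have : ∀ i, (q2 i).1 z = 0 := fun i =>
            eq_zero_of_not_mem (h21 i).2.1 (Set.disjoint_left.1 hd hz)
          simpa [this] using h12 z
        · have : ∀ i, (q1 i).1 z = 0 := fun i =>
            eq_zero_of_not_mem (h11 i).2.1 hz
          simpa [this] using h22 z
    · rw [ENNReal.ofReal_of_nonpos (le_of_not_ge hs2), add_zero]
      exact le_massIn q1 (fun i => ⟨(h11 i).1, (h11 i).2.1.trans h1, (h11 i).2.2⟩) h12
  · rw [ENNReal.ofReal_of_nonpos (le_of_not_ge hs1), zero_add]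
    exact le_massIn q2 (fun i => ⟨(h21 i).1, (h21 i).2.1.trans h2, (h21 i).2.2⟩) h22

end Taux2

section POU

lemma bddLip_bump (x : Z) {r : ℝ} (hr : 0 < r) :
    BddLip (fun z => max 0 (min 1 (2 - dist z x / r))) := by
  refine ⟨⟨(r⁻¹).toNNReal, LipschitzWith.of_dist_le_mul fun z w => ?_⟩, 1, fun z => ?_⟩
  · have h1 : dist (max 0 (min 1 (2 - dist z x / r))) (max 0 (min 1 (2 - dist w x / r)))
        ≤ |(2 - dist z x / r) - (2 - dist w x / r)| := by
      rw [Real.dist_eq]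
      calc |max 0 (min 1 (2 - dist z x / r)) - max 0 (min 1 (2 - dist w x / r))|
          = |max (min 1 (2 - dist z x / r)) 0 - max (min 1 (2 - dist w x / r)) 0| := by
            rw [max_comm, max_comm (min 1 (2 - dist w x / r))]
        _ ≤ |min 1 (2 - dist z x / r) - min 1 (2 - dist w x / r)| :=
            abs_max_sub_max_le_abs _ _ _
        _ ≤ max |(1:ℝ) - 1| |(2 - dist z x / r) - (2 - dist w x / r)| :=
            abs_min_sub_min_le_max _ _ _ _
        _ ≤ _ := by simp
    have h2 : |(2 - dist z x / r) - (2 - dist w x / r)| ≤ r⁻¹ * dist z w := by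
      have : (2 - dist z x / r) - (2 - dist w x / r) = (dist w x - dist z x) / r := by ring
      rw [this, abs_div, abs_of_pos hr, div_eq_inv_mul]
      refine mul_le_mul_of_nonneg_left ?_ (inv_nonneg.2 hr.le)
      have h3 := abs_dist_sub_le w z x
      rw [dist_comm w z] at h3
      exact h3
    refine (h1.trans h2).trans (mul_le_mul_of_nonneg_right ?_ dist_nonneg)
    exact (le_max_left _ _).trans (Real.coe_toNNReal' _).ge
  · rw [abs_of_nonneg (le_max_left _ _)]
    exact max_le zero_le_one (min_le_left _ _)

lemma bump_eq_one (x : Z) {r : ℝ} (hr : 0 < r) {z : Z} (hz : dist z x < r) :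
    max 0 (min 1 (2 - dist z x / r)) = 1 := by
  have h : (1:ℝ) ≤ 2 - dist z x / r := by
    have : dist z x / r < 1 := (div_lt_one hr).2 hz
    linarith
  rw [min_eq_left h]
  exact max_eq_right zero_le_one

lemma bump_support (x : Z) {r : ℝ} (hr : 0 < r) {z : Z}
    (hz : max 0 (min 1 (2 - dist z x / r)) ≠ 0) : dist z x ≤ 2 * r := by
  by_contra h
  push_neg at h
  have : 2 - dist z x / r < 0 := by
    have : 2 < dist z x / r := by rw [lt_div_iff₀ hr]; linarith
    linarith
  exact hz (by rw [min_eq_right (by linarith : 2 - dist z x / r ≤ 1), max_eq_left this.le])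

lemma bump_nonneg (x : Z) (r : ℝ) (z : Z) : 0 ≤ max 0 (min 1 (2 - dist z x / r)) :=
  le_max_left _ _

lemma bump_le_one (x : Z) (r : ℝ) (z : Z) : max 0 (min 1 (2 - dist z x / r)) ≤ 1 :=
  max_le zero_le_one (min_le_left _ _)

lemma bddLip_max_one {u : Z → ℝ} (hu : BddLip u) : BddLip (fun z => max 1 (u z)) := by
  obtain ⟨⟨K, hK⟩, A, hA⟩ := hu
  refine ⟨⟨K, LipschitzWith.of_dist_le_mul fun z w => ?_⟩, max 1 A, fun z => ?_⟩
  · have : dist (max 1 (u z)) (max 1 (u w)) ≤ |u z - u w| := by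
      rw [Real.dist_eq, max_comm, max_comm (1:ℝ) (u w)]
      exact abs_max_sub_max_le_abs _ _ _
    refine this.trans ?_
    have := hK.dist_le_mul z w
    rwa [Real.dist_eq] at this
  · rw [abs_of_nonneg (le_trans zero_le_one (le_max_left _ _))]
    exact max_le (le_max_left _ _) ((le_abs_self _).trans ((hA z).trans (le_max_right _ _)))

lemma bddLip_inv_one_le {u : Z → ℝ} (hu : ∃ K : NNReal, LipschitzWith K u)
    (h1 : ∀ z, 1 ≤ u z) : BddLip (fun z => (u z)⁻¹) := by
  obtain ⟨K, hK⟩ := hu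
  refine ⟨⟨K, LipschitzWith.of_dist_le_mul fun z w => ?_⟩, 1, fun z => ?_⟩
  · have hz := h1 z; have hw := h1 w
    have hz0 : u z ≠ 0 := by linarith
    have hw0 : u w ≠ 0 := by linarith
    have he : (u z)⁻¹ - (u w)⁻¹ = (u w - u z) / (u z * u w) := by
      field_simp
    have : dist (u z)⁻¹ (u w)⁻¹ ≤ |u w - u z| := by
      rw [Real.dist_eq, he, abs_div]
      refine div_le_self (abs_nonneg _) ?_ |>.trans le_rfl
      rw [abs_of_pos (by nlinarith : (0:ℝ) < u z * u w)]
      nlinarith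
    refine this.trans ?_
    have h2 := hK.dist_le_mul w z
    rw [Real.dist_eq, dist_comm w z] at h2
    exact h2
  · have hz := h1 z
    rw [abs_of_nonneg (by positivity : (0:ℝ) ≤ (u z)⁻¹)]
    exact inv_le_one_of_one_le₀ (h1 z)

end POU

lemma exists_pou {C : Set Z} (hC : IsCompact C) (V : ℕ → Set Z)
    (hV : ∀ n, IsOpen (V n)) (hCV : C ⊆ ⋃ n, V n) :
    ∃ (F : Finset ℕ) (G : ℕ → Z → ℝ) (W : Set Z),
      (∀ n, BddLip (G n)) ∧ (∀ n z, 0 ≤ G n z) ∧ (∀ z, (∑ n ∈ F, G n z) ≤ 1) ∧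
      (∀ n ∈ F, tsupport (G n) ⊆ V n) ∧
      IsOpen W ∧ C ⊆ W ∧ (∀ z ∈ W, (∑ n ∈ F, G n z) = 1) := by
  classical
  -- choose radii and indices
  have hsel : ∀ x : C, ∃ (n : ℕ) (r : ℝ), 0 < r ∧ closedBall (x : Z) (2 * r) ⊆ V n := by
    rintro ⟨x, hx⟩
    obtain ⟨n, hn⟩ := Set.mem_iUnion.1 (hCV hx)
    obtain ⟨ε, hε, hball⟩ := Metric.isOpen_iff.1 (hV n) x hn
    refine ⟨n, ε / 3, by linarith, ?_⟩
    refine (Metric.closedBall_subset_ball ?_).trans hball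
    linarith
  choose nx rx hrx hsub using hsel
  -- finite subcover
  obtain ⟨t, ht⟩ := hC.elim_finite_subcover (fun x : C => ball (x : Z) (rx x))
    (fun x => isOpen_ball) (fun x hx => Set.mem_iUnion.2 ⟨⟨x, hx⟩, mem_ball_self (hrx ⟨x, hx⟩)⟩)
  set ψ : C → Z → ℝ := fun x z => max 0 (min 1 (2 - dist z (x : Z) / rx x)) with hψ
  set σ : Z → ℝ := fun z => ∑ x ∈ t, ψ x z with hσ
  set τ : Z → ℝ := fun z => max 1 (σ z) with hτ
  have hσbl : BddLip σ := BddLip.finsetSum t _ fun x _ => bddLip_bump _ (hrx x)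
  have hσ0 : ∀ z, 0 ≤ σ z := fun z => Finset.sum_nonneg fun x _ => bump_nonneg _ _ _
  have hτ1 : ∀ z, 1 ≤ τ z := fun z => le_max_left _ _
  have hτbl : BddLip τ := bddLip_max_one hσbl
  have hτinv : BddLip (fun z => (τ z)⁻¹) := bddLip_inv_one_le hτbl.1 hτ1
  set g : C → Z → ℝ := fun x z => ψ x z * (τ z)⁻¹ with hg
  have hgbl : ∀ x : C, BddLip (g x) := fun x => (bddLip_bump _ (hrx x)).mul hτinv
  have hg0 : ∀ (x : C) z, 0 ≤ g x z := fun x z =>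
    mul_nonneg (bump_nonneg _ _ _) (by positivity)
  have hσle : ∀ z, σ z ≤ τ z := fun z => le_max_right _ _
  have hsumg : ∀ z, (∑ x ∈ t, g x z) = σ z * (τ z)⁻¹ := fun z => by
    rw [hσ]; simp [hg, Finset.sum_mul]
  have hsumg_le : ∀ z, (∑ x ∈ t, g x z) ≤ 1 := fun z => by
    rw [hsumg]
    have h1 : (0:ℝ) < τ z := lt_of_lt_of_le one_pos (hτ1 z)
    rw [← div_eq_mul_inv, div_le_one h1]
    exact hσle z
  set W : Set Z := ⋃ x ∈ t, ball (x : Z) (rx x) with hW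
  have hWopen : IsOpen W := isOpen_biUnion fun x _ => isOpen_ball
  have hCW : C ⊆ W := ht
  have hσW : ∀ z ∈ W, 1 ≤ σ z := by
    intro z hz
    obtain ⟨x, hxt, hxz⟩ := by
      simpa only [hW, Set.mem_iUnion, exists_prop] using hz
    have h1 : ψ x z = 1 := bump_eq_one _ (hrx x) (by simpa [mem_ball] using hxz)
    calc (1:ℝ) = ψ x z := h1.symm
      _ ≤ σ z := Finset.single_le_sum (fun y _ => bump_nonneg _ _ _) hxt
  have hsumg_W : ∀ z ∈ W, (∑ x ∈ t, g x z) = 1 := by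
    intro z hz
    rw [hsumg]
    have hτσ : τ z = σ z := max_eq_right (hσW z hz)
    rw [hτσ, mul_inv_cancel₀ (by linarith [hσW z hz] : σ z ≠ 0)]
  -- group by index
  set F : Finset ℕ := t.image nx with hF
  set G : ℕ → Z → ℝ := fun n z => ∑ x ∈ t.filter fun x => nx x = n, g x z with hG
  have hGsum : ∀ z, (∑ n ∈ F, G n z) = ∑ x ∈ t, g x z := fun z =>
    Finset.sum_fiberwise_of_maps_to (fun x hx => Finset.mem_image_of_mem nx hx) _
  refine ⟨F, G, W, fun n => BddLip.finsetSum _ _ fun x _ => hgbl x,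
    fun n z => Finset.sum_nonneg fun x _ => hg0 x z,
    fun z => by rw [hGsum]; exact hsumg_le z,
    ?_, hWopen, hCW, fun z hz => by rw [hGsum]; exact hsumg_W z hz⟩
  -- supports
  intro n hn
  have hclosed : IsClosed (⋃ x ∈ t.filter fun x => nx x = n, closedBall (x : Z) (2 * rx x)) :=
    (t.filter fun x => nx x = n).finite_toSet.isClosed_biUnion fun x _ => isClosed_closedBall
  have hsupp : Function.support (G n) ⊆
      ⋃ x ∈ t.filter fun x => nx x = n, closedBall (x : Z) (2 * rx x) := by
    intro z hz
    simp only [Function.mem_support, hG] at hz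
    obtain ⟨x, hxt, hxz⟩ : ∃ x ∈ t.filter fun x => nx x = n, g x z ≠ 0 := by
      by_contra h
      push_neg at h
      exact hz (Finset.sum_eq_zero h)
    have hψz : ψ x z ≠ 0 := fun h => hxz (by simp [hg, h])
    exact Set.mem_biUnion hxt (mem_closedBall.2 (bump_support _ (hrx x) hψz))
  have hsub2 : (⋃ x ∈ t.filter fun x => nx x = n, closedBall (x : Z) (2 * rx x)) ⊆ V n := by
    refine Set.iUnion₂_subset fun x hx => ?_
    have := (Finset.mem_filter.1 hx).2
    simpa [this] using hsub x
  exact (closure_minimal hsupp hclosed).trans hsub2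

section Key
variable {m : ℕ} {T : (Z → ℝ) → (Fin m → Z → ℝ) → ℝ}

lemma tsupport_subset_of_eqzero {h : Z → ℝ} {W : Set Z} (hW : IsOpen W)
    (hz : ∀ z ∈ W, h z = 0) : tsupport h ⊆ Wᶜ := by
  refine closure_minimal ?_ hW.isClosed_compl
  intro z hzs hzW
  exact (Function.mem_support.1 hzs) (hz z hzW)

lemma massIn_iUnion_le (hmul : IsMultilinearFunctional T)
    (hcpt : ∀ U : Set Z, IsOpen U → IsBounded U → ∀ ε : ℝ, 0 < ε →
      ∃ C : Set Z, IsCompact C ∧ C ⊆ U ∧ massIn T (U \ C) < ENNReal.ofReal ε)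
    (V : ℕ → Set Z) (hV : ∀ n, IsOpen (V n)) :
    massIn T (⋃ n, V n) ≤ ∑' n, massIn T (V n) := by
  classical
  refine massIn_le fun N q h1 h2 => ?_
  refine ENNReal.le_of_forall_pos_le_add fun ε hε _ => ?_
  set S : Set Z := ⋃ i : Fin N, tsupport (q i).1 with hS
  have hSbdd : IsBounded S := Bornology.isBounded_iUnion.2 fun i => (h1 i).1.2
  have hSsub : S ⊆ ⋃ n, V n := Set.iUnion_subset fun i => (h1 i).2.1
  rcases Set.eq_empty_or_nonempty S with hSe | ⟨z0, hz0⟩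
  · -- all functions vanish
    have hz : ∀ i, (q i).1 = 0 := by
      intro i
      have : tsupport (q i).1 ⊆ ∅ := hSe ▸ Set.subset_iUnion (fun i => tsupport (q i).1) i
      exact Function.support_eq_empty_iff.1
        (Set.subset_empty_iff.1 ((subset_tsupport _).trans this))
    have hT0 : ∀ i, T ((q i).1) ((q i).2) = 0 := fun i => by
      rw [hz i]; exact T_zero hmul (lipLoc_of_one (h1 i).2.2)
    simp [hT0]
  · -- main case
    obtain ⟨R, hR⟩ := hSbdd.subset_closedBall z0
    set U : Set Z := (⋃ n, V n) ∩ ball z0 (R + 1) with hU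
    have hUopen : IsOpen U := (isOpen_iUnion hV).inter isOpen_ball
    have hUbdd : IsBounded U := isBounded_ball.subset Set.inter_subset_right
    have hSU : S ⊆ U := fun z hz =>
      ⟨hSsub hz, by have := hR hz; rw [mem_closedBall] at this; exact mem_ball.2 (by linarith)⟩
    obtain ⟨C, hCcpt, hCU, hCmass⟩ := hcpt U hUopen hUbdd (ε : ℝ) hε
    have hCV : C ⊆ ⋃ n, V n := hCU.trans Set.inter_subset_left
    obtain ⟨F, G, W, hGbl, hG0, hGle1, hGsupp, hWopen, hCW, hGW⟩ :=
      exists_pou hCcpt V hV hCV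
    set h : Z → ℝ := fun z => 1 - ∑ n ∈ F, G n z with hh
    have hhbl : BddLip h := (bddLip_const 1).sub (BddLip.finsetSum F G fun n _ => hGbl n)
    have hh0 : ∀ z, 0 ≤ h z := fun z => by simp only [hh, sub_nonneg]; exact hGle1 z
    have hh1 : ∀ z, h z ≤ 1 := fun z => by
      simp only [hh]
      have : (0:ℝ) ≤ ∑ n ∈ F, G n z := Finset.sum_nonneg fun n _ => hG0 n z
      linarith
    have hhW : ∀ z ∈ W, h z = 0 := fun z hz => by simp [hh, hGW z hz]
    have hhsupp : tsupport h ⊆ Wᶜ := tsupport_subset_of_eqzero hWopen hhW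
    -- decomposition of T values
    have hπ : ∀ i, ∀ k, LipLoc ((q i).2 k) := fun i => lipLoc_of_one (h1 i).2.2
    have hGf : ∀ n (i : Fin N), LipBS (fun z => G n z * (q i).1 z) :=
      fun n i => (hGbl n).mulLipBS (h1 i).1
    have hhf : ∀ i : Fin N, LipBS (fun z => h z * (q i).1 z) :=
      fun i => hhbl.mulLipBS (h1 i).1
    have hTi : ∀ i, T ((q i).1) ((q i).2) =
        (∑ n ∈ F, T (fun z => G n z * (q i).1 z) ((q i).2)) +
          T (fun z => h z * (q i).1 z) ((q i).2) := by
      intro i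
      have e1 : (q i).1 =
          (∑ n ∈ F, fun z => G n z * (q i).1 z) + (fun z => h z * (q i).1 z) := by
        funext z
        simp only [Pi.add_apply, Finset.sum_apply, hh]
        rw [← Finset.sum_mul]
        ring
      rw [show T ((q i).1) ((q i).2) = T ((∑ n ∈ F, fun z => G n z * (q i).1 z) +
            (fun z => h z * (q i).1 z)) ((q i).2) from by rw [← e1],
        hmul.1 _ _ _ (LipBS.finsetSum F _ fun n _ => hGf n i) (hhf i) (hπ i),
        T_finsetSum hmul F _ (fun n _ => hGf n i) (hπ i)]
    have hsum : (∑ i, T ((q i).1) ((q i).2)) =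
        (∑ n ∈ F, ∑ i, T (fun z => G n z * (q i).1 z) ((q i).2)) +
          ∑ i, T (fun z => h z * (q i).1 z) ((q i).2) := by
      have e : (∑ i, T ((q i).1) ((q i).2)) =
          ∑ i, ((∑ n ∈ F, T (fun z => G n z * (q i).1 z) ((q i).2)) +
            T (fun z => h z * (q i).1 z) ((q i).2)) :=
        Finset.sum_congr rfl fun i _ => hTi i
      rw [e, Finset.sum_add_distrib, Finset.sum_comm]
    -- bound each group
    have hGn_bound : ∀ n ∈ F, ENNReal.ofReal
        (∑ i, T (fun z => G n z * (q i).1 z) ((q i).2)) ≤ massIn T (V n) := by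
      intro n hn
      refine le_massIn (fun i => (fun z => G n z * (q i).1 z, (q i).2))
        (fun i => ⟨hGf n i, tsupport_mul_subset_left.trans (hGsupp n hn), (h1 i).2.2⟩)
        (fun z => ?_)
      have hGz1 : G n z ≤ 1 :=
        (Finset.single_le_sum (fun k _ => hG0 k z) hn).trans (hGle1 z)
      have : (∑ i, |G n z * (q i).1 z|) = G n z * ∑ i, |(q i).1 z| := by
        rw [Finset.mul_sum]
        exact Finset.sum_congr rfl fun i _ => by
          rw [abs_mul, abs_of_nonneg (hG0 n z)]
      rw [this]
      exact mul_le_one₀ hGz1 (Finset.sum_nonneg fun i _ => abs_nonneg _) (h2 z)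
    have hh_bound : ENNReal.ofReal
        (∑ i, T (fun z => h z * (q i).1 z) ((q i).2)) ≤ massIn T (U \ C) := by
      refine le_massIn (fun i => (fun z => h z * (q i).1 z, (q i).2))
        (fun i => ⟨hhf i, ?_, (h1 i).2.2⟩) (fun z => ?_)
      · intro z hz
        have hzU : z ∈ U := hSU (Set.subset_iUnion (fun i => tsupport (q i).1) i
          (tsupport_mul_subset_right hz))
        have hzW : z ∈ Wᶜ := hhsupp (tsupport_mul_subset_left hz)
        exact ⟨hzU, fun hzC => hzW (hCW hzC)⟩
      · have : (∑ i, |h z * (q i).1 z|) = h z * ∑ i, |(q i).1 z| := by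
          rw [Finset.mul_sum]
          exact Finset.sum_congr rfl fun i _ => by
            rw [abs_mul, abs_of_nonneg (hh0 z)]
        rw [this]
        exact mul_le_one₀ (hh1 z) (Finset.sum_nonneg fun i _ => abs_nonneg _) (h2 z)
    calc ENNReal.ofReal (∑ i, T ((q i).1) ((q i).2))
        ≤ (∑ n ∈ F, ENNReal.ofReal (∑ i, T (fun z => G n z * (q i).1 z) ((q i).2))) +
            ENNReal.ofReal (∑ i, T (fun z => h z * (q i).1 z) ((q i).2)) := by
          rw [hsum]
          exact ENNReal.ofReal_add_le.trans
            (add_le_add (ofReal_finsetSum_le _ _) le_rfl)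
      _ ≤ (∑ n ∈ F, massIn T (V n)) + massIn T (U \ C) :=
          add_le_add (Finset.sum_le_sum hGn_bound) hh_bound
      _ ≤ (∑' n, massIn T (V n)) + (ε : ℝ≥0∞) := by
          refine add_le_add (ENNReal.sum_le_tsum F) ?_
          refine hCmass.le.trans ?_
          rw [ENNReal.ofReal_coe_nnreal]

end Key

section Final
variable {m : ℕ} {T : (Z → ℝ) → (Fin m → Z → ℝ) → ℝ}

lemma normT_le_massIn {A V : Set Z} (hVo : IsOpen V) (hAV : A ⊆ V) :
    normT T A ≤ massIn T V := iInf₂_le V ⟨hVo, hAV⟩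

lemma normT_mono {A B : Set Z} (h : A ⊆ B) : normT T A ≤ normT T B :=
  le_iInf₂ fun V hV => normT_le_massIn hV.1 (h.trans hV.2)

lemma normT_empty (hmul : IsMultilinearFunctional T) : normT T (∅ : Set Z) = 0 :=
  le_antisymm ((normT_le_massIn isOpen_empty Set.Subset.rfl).trans
    (massIn_empty hmul).le) (zero_le)

lemma exists_open_massIn_le (A : Set Z) {δ : ℝ≥0∞} (hδ : δ ≠ 0) :
    ∃ V : Set Z, IsOpen V ∧ A ⊆ V ∧ massIn T V ≤ normT T A + δ := by
  by_cases hA : normT T A = ⊤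
  · exact ⟨Set.univ, isOpen_univ, Set.subset_univ A, by simp [hA]⟩
  · have hlt : normT T A < normT T A + δ := ENNReal.lt_add_right hA hδ
    rw [normT] at hlt
    conv at hlt => rw [iInf_lt_iff]
    obtain ⟨V, hV⟩ := hlt
    rw [iInf_lt_iff] at hV
    obtain ⟨⟨hVo, hAV⟩, hVlt⟩ := hV
    exact ⟨V, hVo, hAV, hVlt.le⟩

lemma normT_iUnion_le (hmul : IsMultilinearFunctional T)
    (hcpt : ∀ U : Set Z, IsOpen U → IsBounded U → ∀ ε : ℝ, 0 < ε →
      ∃ C : Set Z, IsCompact C ∧ C ⊆ U ∧ massIn T (U \ C) < ENNReal.ofReal ε)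
    (A : ℕ → Set Z) : normT T (⋃ n, A n) ≤ ∑' n, normT T (A n) := by
  refine ENNReal.le_of_forall_pos_le_add fun ε hε _ => ?_
  obtain ⟨δ, hδpos, hδsum⟩ :=
    ENNReal.exists_pos_sum_of_countable (by exact_mod_cast hε.ne' : (ε : ℝ≥0∞) ≠ 0) ℕ
  have hch : ∀ n, ∃ V : Set Z, IsOpen V ∧ A n ⊆ V ∧
      massIn T V ≤ normT T (A n) + δ n :=
    fun n => exists_open_massIn_le (A n) (by exact_mod_cast (hδpos n).ne')
  choose V hVo hAV hVm using hch
  calc normT T (⋃ n, A n)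
      ≤ massIn T (⋃ n, V n) :=
        normT_le_massIn (isOpen_iUnion hVo) (Set.iUnion_mono hAV)
    _ ≤ ∑' n, massIn T (V n) := massIn_iUnion_le hmul hcpt V hVo
    _ ≤ ∑' n, (normT T (A n) + δ n) := ENNReal.tsum_le_tsum hVm
    _ = (∑' n, normT T (A n)) + ∑' n, (δ n : ℝ≥0∞) := ENNReal.tsum_add
    _ ≤ (∑' n, normT T (A n)) + ε := add_le_add le_rfl hδsum.le

lemma normT_superadd_of_separated {A B : Set Z} (hsep : Metric.AreSeparated A B) :
    normT T A + normT T B ≤ normT T (A ∪ B) := by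
  obtain ⟨r, hr0, hr⟩ := hsep
  refine le_iInf₂ fun V hV => ?_
  obtain ⟨hVo, hABV⟩ := hV
  set d : ℝ := (min r 1).toReal with hd
  have hdpos : 0 < d := ENNReal.toReal_pos
    ((lt_min (pos_iff_ne_zero.2 hr0) one_pos).ne')
    (by exact ne_top_of_le_ne_top one_ne_top (min_le_right r 1))
  set V₁ : Set Z := V ∩ thickening (d / 3) A with hV₁
  set V₂ : Set Z := V ∩ thickening (d / 3) B with hV₂
  have hAV₁ : A ⊆ V₁ := Set.subset_inter (Set.subset_union_left.trans hABV)
    (self_subset_thickening (by linarith) A)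
  have hBV₂ : B ⊆ V₂ := Set.subset_inter (Set.subset_union_right.trans hABV)
    (self_subset_thickening (by linarith) B)
  have hdisj : Disjoint V₁ V₂ := by
    rw [Set.disjoint_left]
    rintro z ⟨-, hz1⟩ ⟨-, hz2⟩
    obtain ⟨x, hxA, hxz⟩ := Metric.mem_thickening_iff.1 hz1
    obtain ⟨y, hyB, hyz⟩ := Metric.mem_thickening_iff.1 hz2
    have hxy : dist x y < d := by
      have := dist_triangle x z y
      rw [dist_comm x z] at this
      linarith
    have h1 : edist x y < min r 1 := by
      rw [edist_dist]
      calc ENNReal.ofReal (dist x y) < ENNReal.ofReal d :=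
          ENNReal.ofReal_lt_ofReal_iff hdpos |>.2 hxy
        _ = min r 1 := by
          rw [hd, ENNReal.ofReal_toReal
            (ne_top_of_le_ne_top one_ne_top (min_le_right r 1))]
    exact absurd ((min_le_left r 1).trans (hr x hxA y hyB)) (not_le.2 h1)
  calc normT T A + normT T B
      ≤ massIn T V₁ + massIn T V₂ :=
        add_le_add (normT_le_massIn (hVo.inter isOpen_thickening) hAV₁)
          (normT_le_massIn (hVo.inter isOpen_thickening) hBV₂)
    _ ≤ massIn T V := massIn_union_disjoint V₁ V₂ V Set.inter_subset_left
        Set.inter_subset_left hdisj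

end Final


/-- Proposition 2.3: if `T` is multilinear and its mass in bounded open
sets is concentrated near compact sets, then `‖T‖` is a Borel regular outer measure. -/
theorem normT_isOuterMeasure {Z : Type*} [MetricSpace Z] [MeasurableSpace Z] [BorelSpace Z]
    {m : ℕ} (T : (Z → ℝ) → (Fin m → Z → ℝ) → ℝ)
    (hmul : IsMultilinearFunctional T)
    (hcpt : ∀ U : Set Z, IsOpen U → IsBounded U → ∀ ε : ℝ, 0 < ε →
      ∃ C : Set Z, IsCompact C ∧ C ⊆ U ∧ massIn T (U \ C) < ENNReal.ofReal ε) :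
    ∃ μ : MeasureTheory.OuterMeasure Z,
      (∀ A : Set Z, μ A = normT T A) ∧
      (∀ E : Set Z, MeasurableSet E → μ.IsCaratheodory E) ∧
      (∀ A : Set Z, ∃ B : Set Z, MeasurableSet B ∧ A ⊆ B ∧ μ B = μ A) := by
  classical
  set μ : OuterMeasure Z :=
    { measureOf := normT T
      empty := normT_empty hmul
      mono := fun {s₁ s₂} h => normT_mono h
      iUnion_nat := fun s _ => normT_iUnion_le hmul hcpt s } with hμ
  have hcoe : ∀ A : Set Z, μ A = normT T A := fun A => rfl
  have hmet : μ.IsMetric := by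
    intro s t hst
    refine le_antisymm (measure_union_le s t) ?_
    rw [hcoe, hcoe, hcoe]
    exact normT_superadd_of_separated hst
  have hbor := hmet.borel_le_caratheodory
  refine ⟨μ, hcoe, ?_, ?_⟩
  · intro E hE
    have hE' : MeasurableSet[borel Z] E := by
      rwa [← BorelSpace.measurable_eq (α := Z)]
    exact (OuterMeasure.isCaratheodory_iff μ).1 (hbor E hE')
  · intro A
    have hch : ∀ n : ℕ, ∃ V : Set Z, IsOpen V ∧ A ⊆ V ∧
        massIn T V ≤ normT T A + ((n : ℝ≥0∞))⁻¹ :=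
      fun n => exists_open_massIn_le A (ENNReal.inv_ne_zero.2 (ENNReal.natCast_ne_top n))
    choose V hVo hAV hVm using hch
    refine ⟨⋂ n, V n, MeasurableSet.iInter fun n => (hVo n).measurableSet,
      Set.subset_iInter hAV, ?_⟩
    rw [hcoe, hcoe]
    refine le_antisymm ?_ (normT_mono (Set.subset_iInter hAV))
    refine ENNReal.le_of_forall_pos_le_add fun ε hε _ => ?_
    obtain ⟨n, hn⟩ := ENNReal.exists_inv_nat_lt
      (by exact_mod_cast hε.ne' : (ε : ℝ≥0∞) ≠ 0)
    calc normT T (⋂ k, V k) ≤ massIn T (V n) :=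
          normT_le_massIn (hVo n) (Set.iInter_subset V n)
      _ ≤ normT T A + (n : ℝ≥0∞)⁻¹ := hVm n
      _ ≤ normT T A + ε := add_le_add le_rfl hn.le
end

section
/- Let T ∈ M_{m,loc}(Z) and let μ be a Borel measure on Z, finite on bounded sets, such that |T(f,π)| ≤ (∏_i Lip(π_i|_{spt f})) ∫|f| dμ for all (f,π) ∈ Lip_bs(Z) × Lip_loc(Z)^m. Then ‖T‖(B) ≤ μ(B) for every Borel set B, i.e., ‖T‖ is the minimal such measure. -/
open Metric Filter MeasureTheory ENNReal Bornology Topology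

variable {Z : Type*} [MetricSpace Z]

/-- Proposition 2.5, second part: `‖T‖` is minimal among Borel measures,
finite on bounded sets, satisfying the integral mass inequality. -/
theorem normT_minimal {Z : Type*} [MetricSpace Z] [MeasurableSpace Z] [BorelSpace Z]
    {m : ℕ} (T : (Z → ℝ) → (Fin m → Z → ℝ) → ℝ)
    (hT : IsMetricFunctional T) (hTloc : MlocCond T)
    (μ : Measure Z) (hfin : ∀ s : Set Z, IsBounded s → μ s < ⊤)
    (hbound : ∀ (f : Z → ℝ) (π : Fin m → Z → ℝ) (K : Fin m → NNReal),
      LipBS f → (∀ i, LipLoc (π i)) →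
      (∀ i, LipschitzOnWith (K i) (π i) (tsupport f)) →
      ENNReal.ofReal |T f π| ≤ (∏ i, (K i : ℝ≥0∞)) * ∫⁻ z, ENNReal.ofReal |f z| ∂μ) :
    ∀ B : Set Z, MeasurableSet B → normT T B ≤ μ B := by
  -- Step 1: mass in an open set is bounded by μ of that set.
  have key : ∀ V : Set Z, IsOpen V → massIn T V ≤ μ V := by
    intro V hV
    refine iSup_le ?_
    rintro ⟨⟨n, q⟩, hq1, hq2⟩
    simp only
    calc ENNReal.ofReal (∑ i : Fin n, T (q i).1 (q i).2)
        ≤ ENNReal.ofReal (∑ i : Fin n, |T (q i).1 (q i).2|) :=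
          ENNReal.ofReal_le_ofReal (Finset.sum_le_sum fun i _ => le_abs_self _)
      _ = ∑ i : Fin n, ENNReal.ofReal |T (q i).1 (q i).2| :=
          ENNReal.ofReal_sum_of_nonneg fun i _ => abs_nonneg _
      _ ≤ ∑ i : Fin n, ∫⁻ z, ENNReal.ofReal |(q i).1 z| ∂μ := by
          refine Finset.sum_le_sum fun i _ => ?_
          have h := hbound (q i).1 (q i).2 (fun _ => 1) (hq1 i).1
            (fun k s hs => ⟨1, ((hq1 i).2.2 k).lipschitzOnWith⟩)
            (fun k => ((hq1 i).2.2 k).lipschitzOnWith)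
          simpa using h
      _ = ∫⁻ z, ∑ i : Fin n, ENNReal.ofReal |(q i).1 z| ∂μ := by
          refine (lintegral_finset_sum _ fun i _ => ?_).symm
          have hc : Continuous ((q i).1) := by
            obtain ⟨K, hK⟩ := (hq1 i).1.1
            exact hK.continuous
          exact ENNReal.measurable_ofReal.comp hc.abs.measurable
      _ ≤ ∫⁻ z, V.indicator (fun _ => (1 : ℝ≥0∞)) z ∂μ := by
          refine lintegral_mono fun z => ?_
          by_cases hz : z ∈ V
          · rw [Set.indicator_of_mem hz]
            rw [← ENNReal.ofReal_sum_of_nonneg fun i _ => abs_nonneg _]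
            exact le_trans (ENNReal.ofReal_le_ofReal (hq2 z)) (by simp)
          · rw [Set.indicator_of_notMem hz]
            have : ∀ i : Fin n, (q i).1 z = 0 := fun i =>
              image_eq_zero_of_notMem_tsupport (fun hmem => hz ((hq1 i).2.1 hmem))
            simp [this]
      _ = μ V := by
          simp [lintegral_indicator, hV.measurableSet]
  -- Step 2: μ is outer regular.
  have : SigmaFinite μ := by
    rcases isEmpty_or_nonempty Z with hZ | ⟨⟨z0⟩⟩
    · exact ⟨⟨⟨fun _ => Set.univ, fun _ => trivial, fun _ =>
        (hfin Set.univ (by simp [Set.univ_eq_empty_iff.2 hZ])), by simp [Set.iUnion_const]⟩⟩⟩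
    · exact ⟨⟨⟨fun n => Metric.ball z0 n, fun _ => trivial,
        fun n => hfin _ isBounded_ball, iUnion_ball_nat z0⟩⟩⟩
  have hreg : μ.OuterRegular := by
    rcases isEmpty_or_nonempty Z with hZ | ⟨⟨z0⟩⟩
    · refine MeasureTheory.Measure.OuterRegular.of_restrict
        (s := fun _ => (Set.univ : Set Z)) (fun n => ?_) (fun _ => isOpen_univ) (by simp [Set.iUnion_const])
      have : IsFiniteMeasure (μ.restrict Set.univ) :=
        ⟨by simpa using hfin Set.univ (by simp [Set.univ_eq_empty_iff.2 hZ])⟩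
      infer_instance
    · refine MeasureTheory.Measure.OuterRegular.of_restrict
        (s := fun n => Metric.ball z0 n) (fun n => ?_) (fun _ => isOpen_ball)
        (by rw [iUnion_ball_nat z0])
      have : IsFiniteMeasure (μ.restrict (Metric.ball z0 n)) := by
        constructor
        rw [Measure.restrict_apply MeasurableSet.univ, Set.univ_inter]
        exact hfin _ isBounded_ball
      infer_instance
  -- Step 3: conclude.
  intro B hB
  rw [Set.measure_eq_iInf_isOpen]
  refine le_iInf fun U => le_iInf fun hBU => le_iInf fun hU => ?_
  exact le_trans (iInf_le_of_le U (iInf_le_of_le ⟨hU, hBU⟩ le_rfl)) (key U hU)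
end
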